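/- Let n ≥ 24 and let m be a natural number with m ≤ (n/(48e))², where e = exp(1). Let X₁, …, X_m be independent random points, each uniformly distributed on the unit square [0,1]² ⊆ ℝ². Then with probability at least 1 − 8·4^{−n/12}, the random set {X₁, …, X_m} contains no monotone subset of cardinality ⌊n/12⌋. -/

import Mathlib

open MeasureTheory
open scoped ENNReal

/-- All points of `S` have pairwise distinct x-coordinates and pairwise distinct
y-coordinates. -/
def DistinctCoords (S : Set (ℝ × ℝ)) : Prop :=
  ∀ p ∈ S, ∀ q ∈ S, p ≠ q → p.1 ≠ q.1 ∧ p.2 ≠ q.2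

/-- `S` is increasing: larger x-coordinate implies larger y-coordinate. -/
def IncreasingPts (S : Set (ℝ × ℝ)) : Prop :=
  ∀ p ∈ S, ∀ q ∈ S, p.1 < q.1 → p.2 < q.2

/-- `S` is decreasing: larger x-coordinate implies smaller y-coordinate. -/
def DecreasingPts (S : Set (ℝ × ℝ)) : Prop :=
  ∀ p ∈ S, ∀ q ∈ S, p.1 < q.1 → q.2 < p.2

/-- `S` is monotone: it has pairwise distinct x- and y-coordinates and is either
increasing or decreasing. -/
def MonotonePts (S : Set (ℝ × ℝ)) : Prop :=
  DistinctCoords S ∧ (IncreasingPts S ∨ DecreasingPts S)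

/-- The uniform probability measure on the unit square `[0,1]² ⊆ ℝ²`. -/
noncomputable def unifSquare : Measure (ℝ × ℝ) :=
  volume.restrict (Set.Icc (0 : ℝ) 1 ×ˢ Set.Icc (0 : ℝ) 1)

lemma strictMono_perm_eq_one {k : ℕ} (σ : Equiv.Perm (Fin k)) (h : StrictMono σ) : σ = 1 := by
  have : ∀ i, σ i = i := fun i => Fin.ext (Fin.coe_orderIso_apply (StrictMono.orderIsoOfSurjective σ h σ.surjective) i)
  exact Equiv.ext this

lemma pow_le_exp_mul_factorial : ∀ k : ℕ, (k : ℝ) ^ k ≤ Real.exp 1 ^ k * (Nat.factorial k)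
  | 0 => by norm_num
  | (k+1) => by
    have ih := pow_le_exp_mul_factorial k
    have hek : (1 : ℝ) ≤ Real.exp 1 := by
      have := Real.add_one_le_exp (1 : ℝ); linarith
    have key : ((k+1 : ℕ) : ℝ) ^ k ≤ Real.exp 1 ^ (k+1) * Nat.factorial k := by
      rcases Nat.eq_zero_or_pos k with hk | hk
      · subst hk; simpa using by positivity
      · have hkpos : (0:ℝ) < k := by exact_mod_cast hk
        have h1 : ((k+1:ℕ):ℝ) = (k:ℝ) * (1 + 1/(k:ℝ)) := by
          field_simp
          exact Nat.cast_succ k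
        have h2 : (1 + 1/(k:ℝ)) ^ k ≤ Real.exp 1 := by
          have := Real.add_one_le_exp (1/(k:ℝ))
          calc (1 + 1/(k:ℝ)) ^ k ≤ (Real.exp (1/(k:ℝ))) ^ k := by
                apply pow_le_pow_left₀ (by positivity) (by linarith)
            _ = Real.exp ((k:ℝ) * (1/(k:ℝ))) := by rw [← Real.exp_nat_mul]
            _ = Real.exp 1 := by rw [mul_one_div, div_self (ne_of_gt hkpos)]
        calc ((k+1:ℕ):ℝ) ^ k = (k:ℝ)^k * (1 + 1/(k:ℝ))^k := by rw [h1, mul_pow]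
          _ ≤ (Real.exp 1 ^ k * Nat.factorial k) * Real.exp 1 := by
              apply mul_le_mul ih h2 (by positivity) (by positivity)
          _ = Real.exp 1 ^ (k+1) * Nat.factorial k := by ring
    calc ((k+1:ℕ):ℝ) ^ (k+1) = ((k+1:ℕ):ℝ) * ((k+1:ℕ):ℝ) ^ k := by ring
      _ ≤ ((k+1:ℕ):ℝ) * (Real.exp 1 ^ (k+1) * Nat.factorial k) := by
          apply mul_le_mul_of_nonneg_left key (by positivity)
      _ = Real.exp 1 ^ (k+1) * Nat.factorial (k+1) := by
          rw [Nat.factorial_succ]; push_cast; ring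
open scoped ENNReal
lemma measurableSet_strictMono_comp {k : ℕ} (σ : Equiv.Perm (Fin k)) :
    MeasurableSet {u : Fin k → ℝ | StrictMono (u ∘ σ)} := by
  have : {u : Fin k → ℝ | StrictMono (u ∘ σ)} =
      ⋂ (a : Fin k) (b : Fin k), {u : Fin k → ℝ | a < b → u (σ a) < u (σ b)} := by
    ext u
    simp only [Set.mem_setOf_eq, Set.mem_iInter, StrictMono, Function.comp_apply]
  rw [this]
  refine MeasurableSet.iInter fun a => MeasurableSet.iInter fun b => ?_
  by_cases hab : a < b
  · have : {u : Fin k → ℝ | a < b → u (σ a) < u (σ b)} =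
        {u : Fin k → ℝ | u (σ a) < u (σ b)} := by ext u; simp [hab]
    rw [this]
    exact measurableSet_lt (measurable_pi_apply _) (measurable_pi_apply _)
  · have : {u : Fin k → ℝ | a < b → u (σ a) < u (σ b)} = Set.univ := by
      ext u; simp [hab]
    rw [this]; exact MeasurableSet.univ

lemma measure_strictMono_comp_le {k : ℕ} (ν : Measure ℝ) [IsProbabilityMeasure ν]
    (σ : Equiv.Perm (Fin k)) :
    (Measure.pi fun _ : Fin k => ν) {u | StrictMono (u ∘ σ)} ≤ ((Nat.factorial k : ℝ≥0∞))⁻¹ := by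
  set P := Measure.pi fun _ : Fin k => ν with hP
  -- all sets have the same measure
  have hsame : ∀ τ : Equiv.Perm (Fin k),
      P {u | StrictMono (u ∘ τ)} = P {u | StrictMono (u ∘ (1 : Equiv.Perm (Fin k)))} := by
    intro τ
    have mp := measurePreserving_piCongrLeft (fun _ : Fin k => ν) (τ : Fin k ≃ Fin k)
    have hpre : (MeasurableEquiv.piCongrLeft (fun _ => ℝ) (τ : Fin k ≃ Fin k)) ⁻¹'
        {u : Fin k → ℝ | StrictMono (u ∘ τ)} =
        {u : Fin k → ℝ | StrictMono (u ∘ (1 : Equiv.Perm (Fin k)))} := by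
      ext u
      have hcomp : ((MeasurableEquiv.piCongrLeft (fun _ => ℝ) (τ : Fin k ≃ Fin k)) u) ∘ τ = u := by
        funext a
        simp [MeasurableEquiv.coe_piCongrLeft, Equiv.piCongrLeft_apply_apply]
      simp only [Set.mem_preimage, Set.mem_setOf_eq, hcomp]
      rfl
    have := mp.measure_preimage (measurableSet_strictMono_comp τ).nullMeasurableSet
    rw [hpre] at this
    exact this.symm
  have hone : ∀ τ : Equiv.Perm (Fin k),
      P {u | StrictMono (u ∘ τ)} = P {u | StrictMono (u ∘ (1 : Equiv.Perm (Fin k)))} := hsame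
  -- disjointness
  have hdisj : Set.PairwiseDisjoint (Finset.univ : Finset (Equiv.Perm (Fin k)))
      (fun τ : Equiv.Perm (Fin k) => {u : Fin k → ℝ | StrictMono (u ∘ τ)}) := by
    intro τ₁ _ τ₂ _ hne
    refine Set.disjoint_left.2 fun u h1 h2 => hne ?_
    have h1 : StrictMono (u ∘ τ₁) := h1
    have h2 : StrictMono (u ∘ τ₂) := h2
    have hρ : StrictMono ((τ₂⁻¹ : Equiv.Perm (Fin k)) * τ₁ : Equiv.Perm (Fin k)) := by
      intro a b hab
      have := h1 hab
      have hcb : (u ∘ τ₂) (τ₂⁻¹ (τ₁ a)) < (u ∘ τ₂) (τ₂⁻¹ (τ₁ b)) := by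
        simpa [Function.comp, Equiv.Perm.inv_def, Equiv.apply_symm_apply] using this
      exact h2.lt_iff_lt.mp hcb
    have := strictMono_perm_eq_one _ hρ
    have : τ₁ = τ₂ := by
      have h' : τ₂ * ((τ₂⁻¹ : Equiv.Perm (Fin k)) * τ₁) = τ₂ * 1 := by rw [this]
      simpa [mul_assoc] using h'
    exact this
  have hsum : ∑ τ : Equiv.Perm (Fin k), P {u | StrictMono (u ∘ τ)} ≤ 1 := by
    rw [← measure_biUnion_finset hdisj (fun τ _ => measurableSet_strictMono_comp τ)]
    exact prob_le_one
  rw [Finset.sum_congr rfl (fun τ _ => hone τ)] at hsum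
  rw [Finset.sum_const, Finset.card_univ, Fintype.card_perm, Fintype.card_fin] at hsum
  have hsum' : (Nat.factorial k : ℝ≥0∞) * P {u | StrictMono (u ∘ (1 : Equiv.Perm (Fin k)))} ≤ 1 := by
    simpa [nsmul_eq_mul] using hsum
  rw [hone σ]
  rw [ENNReal.le_inv_iff_mul_le, mul_comm]
  exact hsum'


noncomputable def unifSeg : Measure ℝ := volume.restrict (Set.Icc (0 : ℝ) 1)

instance : IsProbabilityMeasure unifSeg := by
  constructor
  rw [unifSeg, Measure.restrict_apply_univ, Real.volume_Icc]
  norm_num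

lemma unifSquare_eq_prod : unifSquare = unifSeg.prod unifSeg := by
  rw [unifSquare, unifSeg, Measure.prod_restrict, ← Measure.volume_eq_prod]

instance : IsProbabilityMeasure unifSquare := by
  constructor
  rw [unifSquare, Measure.restrict_apply_univ, Measure.volume_eq_prod, Measure.prod_prod,
    Real.volume_Icc]
  norm_num

lemma map_pi_of_iIndep {Ω : Type*} [MeasurableSpace Ω] (μ : Measure Ω) [IsProbabilityMeasure μ]
    {m k : ℕ} (X : Fin m → Ω → ℝ × ℝ) (hmeas : ∀ i, Measurable (X i))
    (hindep : ProbabilityTheory.iIndepFun X μ)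
    (hlaw : ∀ i, Measure.map (X i) μ = unifSquare) (g : Fin k → Fin m)
    (hg : Function.Injective g) :
    Measure.map (fun ω j => X (g j) ω) μ = Measure.pi (fun _ : Fin k => unifSquare) := by
  classical
  symm
  apply Measure.pi_eq
  intro s hs

  have hY : Measurable (fun ω j => X (g j) ω) :=
    measurable_pi_lambda _ fun j => hmeas (g j)
  rw [Measure.map_apply hY (MeasurableSet.univ_pi hs)]
  set sets : Fin m → Set (ℝ × ℝ) := fun i => if h : ∃ j, g j = i then s h.choose else Set.univ
    with hsets
  have hset : ∀ j, sets (g j) = s j := by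
    intro j
    have h : ∃ j', g j' = g j := ⟨j, rfl⟩
    have : h.choose = j := hg h.choose_spec
    simp only [hsets, dif_pos h]
    exact congrArg s this
  have hpre : (fun ω j => X (g j) ω) ⁻¹' (Set.univ.pi s) =
      ⋂ i ∈ Finset.image g Finset.univ, X i ⁻¹' sets i := by
    ext ω
    simp only [Set.mem_preimage, Set.mem_univ_pi, Set.mem_iInter, Finset.mem_image,
      Finset.mem_univ, true_and]
    constructor
    · rintro h i ⟨j, rfl⟩
      rw [hset]; exact h j
    · intro h j
      have := h (g j) ⟨j, rfl⟩
      rwa [hset] at this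
  rw [hpre]
  rw [hindep.measure_inter_preimage_eq_mul _ (fun i _ => ?_)]
  swap
  · by_cases h : ∃ j, g j = i
    · simp only [hsets, dif_pos h]; exact hs _
    · simp only [hsets, dif_neg h]; exact MeasurableSet.univ
  rw [Finset.prod_image (fun a _ b _ hab => hg hab)]
  refine Finset.prod_congr rfl fun j _ => ?_
  rw [hset, ← Measure.map_apply (hmeas (g j)) (hs j), hlaw]

lemma bound_A {Ω : Type*} [MeasurableSpace Ω] (μ : Measure Ω) [IsProbabilityMeasure μ]
    {m k : ℕ} (X : Fin m → Ω → ℝ × ℝ) (hmeas : ∀ i, Measurable (X i))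
    (hindep : ProbabilityTheory.iIndepFun X μ)
    (hlaw : ∀ i, Measure.map (X i) μ = unifSquare) (g : Fin k → Fin m)
    (σ : Equiv.Perm (Fin k)) :
    μ {ω | StrictMono (fun j => (X (g j) ω).1) ∧
        StrictMono ((fun j => (X (g j) ω).2) ∘ σ)} ≤
      ((Nat.factorial k : ℝ≥0∞))⁻¹ * ((Nat.factorial k : ℝ≥0∞))⁻¹ := by
  classical
  set e := MeasurableEquiv.arrowProdEquivProdArrow ℝ ℝ (Fin k) with he
  set S1 : Set (Fin k → ℝ) := {u | StrictMono (u ∘ (1 : Equiv.Perm (Fin k)))} with hS1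
  set Sσ : Set (Fin k → ℝ) := {u | StrictMono (u ∘ σ)} with hSσ
  set B : Set (Fin k → ℝ × ℝ) := e ⁻¹' (S1 ×ˢ Sσ) with hB
  have hBmeas : MeasurableSet B :=
    e.measurable ((measurableSet_strictMono_comp 1).prod (measurableSet_strictMono_comp σ))
  have hA : {ω | StrictMono (fun j => (X (g j) ω).1) ∧
      StrictMono ((fun j => (X (g j) ω).2) ∘ σ)} = (fun ω j => X (g j) ω) ⁻¹' B := by
    ext ω
    simp only [hB, Set.mem_preimage, Set.mem_prod, Set.mem_setOf_eq, he,
      MeasurableEquiv.arrowProdEquivProdArrow, Equiv.arrowProdEquivProdArrow,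
      MeasurableEquiv.coe_mk, Equiv.coe_fn_mk, hS1, hSσ]
    constructor
    · rintro ⟨h1, h2⟩; exact ⟨h1, h2⟩
    · rintro ⟨h1, h2⟩; exact ⟨h1, h2⟩
  rw [hA]
  by_cases hg : Function.Injective g
  · have hY : Measurable (fun ω j => X (g j) ω) :=
      measurable_pi_lambda _ fun j => hmeas (g j)
    rw [Measure.map_apply hY hBmeas |>.symm,
      map_pi_of_iIndep μ X hmeas hindep hlaw g hg]
    have : Measure.pi (fun _ : Fin k => unifSquare) =
        Measure.pi (fun _ : Fin k => unifSeg.prod unifSeg) := by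
      simp [unifSquare_eq_prod]
    rw [this, hB]
    have mp := measurePreserving_arrowProdEquivProdArrow ℝ ℝ (Fin k)
      (fun _ => unifSeg) (fun _ => unifSeg)
    rw [mp.measure_preimage
      (((measurableSet_strictMono_comp 1).prod (measurableSet_strictMono_comp σ))).nullMeasurableSet]
    rw [Measure.prod_prod]
    exact mul_le_mul' (measure_strictMono_comp_le unifSeg 1) (measure_strictMono_comp_le unifSeg σ)
  · have : (fun ω j => X (g j) ω) ⁻¹' B = ∅ := by
      rw [Function.not_injective_iff] at hg
      obtain ⟨a, b, hab, hne⟩ := hg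
      ext ω
      simp only [Set.mem_preimage, Set.mem_empty_iff_false, iff_false]
      intro hmem
      have h1 : StrictMono (fun j => (X (g j) ω).1) := by
        have := hmem
        rw [hB, Set.mem_preimage] at this
        exact this.1
      rcases lt_or_gt_of_ne hne with h | h
      · have := h1 h; simp only [hab] at this; exact lt_irrefl _ this
      · have := h1 h; simp only [hab] at this; exact lt_irrefl _ this
    rw [this]
    simp

lemma real_bound (n k m' : ℕ) (hn : 24 ≤ n) (hk : k = n / 12)
    (hm : (m' : ℝ) ≤ ((n : ℝ) / (48 * Real.exp 1)) ^ 2) :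
    (m' : ℝ) ^ k * (2 * (((Nat.factorial k : ℝ))⁻¹ * ((Nat.factorial k : ℝ))⁻¹)) ≤
      8 * (4 : ℝ) ^ (-(n : ℝ) / 12) := by
  have he : (0:ℝ) < Real.exp 1 := Real.exp_pos 1
  have hk2 : 2 ≤ k := by omega
  have hn24k : n ≤ 24 * k := by omega
  have hn12k : n ≤ 12 * k + 12 := by omega
  have hkpos : (0:ℝ) < k := by exact_mod_cast Nat.pos_of_ne_zero (by omega)
  have hfact_pos : (0:ℝ) < Nat.factorial k := by exact_mod_cast Nat.factorial_pos k
  have hm0 : (0:ℝ) ≤ m' := Nat.cast_nonneg _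
  set a : ℝ := (n:ℝ) / (48 * Real.exp 1) with ha
  have ha0 : 0 ≤ a := by positivity
  have step1 : (m':ℝ)^k ≤ (a^2)^k := pow_le_pow_left₀ hm0 hm k
  have hinv : ((Nat.factorial k : ℝ))⁻¹ ≤ (Real.exp 1 / k)^k := by
    rw [div_pow, le_div_iff₀ (pow_pos hkpos k), inv_mul_le_iff₀ hfact_pos]
    calc ((k:ℝ))^k ≤ Real.exp 1 ^ k * Nat.factorial k := pow_le_exp_mul_factorial k
      _ = Nat.factorial k * Real.exp 1 ^ k := by ring
  have hinv0 : (0:ℝ) ≤ ((Nat.factorial k : ℝ))⁻¹ := by positivity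
  have step2 : (m':ℝ)^k * (2 * (((Nat.factorial k : ℝ))⁻¹ * ((Nat.factorial k : ℝ))⁻¹)) ≤
      2 * ((a * (Real.exp 1 / k))^2)^k := by
    have h1 : ((Nat.factorial k : ℝ))⁻¹ * ((Nat.factorial k : ℝ))⁻¹ ≤
        (Real.exp 1 / k)^k * (Real.exp 1 / k)^k :=
      mul_le_mul hinv hinv hinv0 (by positivity)
    have h2 : (m':ℝ)^k * (((Nat.factorial k : ℝ))⁻¹ * ((Nat.factorial k : ℝ))⁻¹) ≤
        (a^2)^k * ((Real.exp 1 / k)^k * (Real.exp 1 / k)^k) :=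
      mul_le_mul step1 h1 (by positivity) (by positivity)
    have h3 : (a^2)^k * ((Real.exp 1 / k)^k * (Real.exp 1 / k)^k) =
        ((a * (Real.exp 1 / k))^2)^k := by
      ring
    nlinarith [h2, h3]
  have hc : a * (Real.exp 1 / k) = (n:ℝ) / (48 * k) := by
    rw [ha]; field_simp
  have hc2 : (n:ℝ) / (48 * k) ≤ 1/2 := by
    rw [div_le_div_iff₀ (by positivity) (by norm_num)]
    have : (n:ℝ) ≤ 24 * k := by exact_mod_cast hn24k
    linarith
  have step3 : ((a * (Real.exp 1 / k))^2)^k ≤ ((1/2:ℝ)^2)^k := by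
    apply pow_le_pow_left₀ (by positivity)
    apply pow_le_pow_left₀ (by positivity)
    rw [hc]; exact hc2
  have step4 : 2 * ((1/2:ℝ)^2)^k ≤ 8 * (4 : ℝ) ^ (-(n : ℝ) / 12) := by
    have h4 : (4:ℝ)^(-((k:ℝ)+1)) ≤ (4:ℝ)^(-(n : ℝ) / 12) := by
      apply Real.rpow_le_rpow_left_iff (by norm_num : (1:ℝ) < 4) |>.2
      have : (n:ℝ) ≤ 12 * k + 12 := by exact_mod_cast hn12k
      rw [neg_div, neg_le_neg_iff]
      linarith
    have h5 : (4:ℝ)^(-((k:ℝ)+1)) = ((4:ℝ)^(k+1:ℕ))⁻¹ := by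
      rw [Real.rpow_neg (by norm_num)]
      congr 1
      rw [← Real.rpow_natCast (4:ℝ) (k+1)]
      push_cast
      ring_nf
    have h6 : 2 * ((1/2:ℝ)^2)^k = 8 * ((4:ℝ)^(k+1:ℕ))⁻¹ := by
      rw [show ((1/2:ℝ)^2) = (4:ℝ)⁻¹ by norm_num, inv_pow, pow_succ]
      rw [mul_inv]
      field_simp
      ring
    rw [h6, ← h5]
    nlinarith [h4]
  calc (m' : ℝ) ^ k * (2 * (((Nat.factorial k : ℝ))⁻¹ * ((Nat.factorial k : ℝ))⁻¹)) ≤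
      2 * ((a * (Real.exp 1 / k))^2)^k := step2
    _ ≤ 2 * ((1/2:ℝ)^2)^k := by linarith [step3]
    _ ≤ 8 * (4 : ℝ) ^ (-(n : ℝ) / 12) := step4

lemma bad_mem_union {Ω : Type*} {m k : ℕ} (X : Fin m → Ω → ℝ × ℝ) (ω : Ω)
    (S : Finset (ℝ × ℝ)) (hsub : (↑S : Set (ℝ × ℝ)) ⊆ Set.range (fun i => X i ω))
    (hcard : S.card = k) (hmono : MonotonePts (↑S : Set (ℝ × ℝ))) :
    ∃ g : Fin k → Fin m, StrictMono (fun j => (X (g j) ω).1) ∧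
      (StrictMono ((fun j => (X (g j) ω).2) ∘ (1 : Equiv.Perm (Fin k))) ∨
       StrictMono ((fun j => (X (g j) ω).2) ∘ (Fin.revPerm : Equiv.Perm (Fin k)))) := by
  classical
  obtain ⟨hdist, hmon⟩ := hmono
  have hinj : Set.InjOn Prod.fst (↑S : Set (ℝ × ℝ)) := by
    intro p hp q hq h
    by_contra hne
    exact (hdist p hp q hq hne).1 h
  set T := S.image Prod.fst with hTdef
  have hT : T.card = k := by
    rw [hTdef, Finset.card_image_of_injOn hinj, hcard]
  set o := T.orderIsoOfFin hT with ho
  have hp : ∀ j : Fin k, ∃ q ∈ S, q.1 = ((o j : ℝ)) := by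
    intro j
    have : ((o j : ℝ)) ∈ T := (o j).2
    obtain ⟨q, hq, hq2⟩ := Finset.mem_image.mp this
    exact ⟨q, hq, hq2⟩
  choose p hpS hpx using hp
  have hxmono : StrictMono fun j => (p j).1 := by
    intro j j' hjj
    show (p j).1 < (p j').1
    rw [hpx, hpx]
    exact_mod_cast o.strictMono hjj
  have hrange : ∀ j, p j ∈ Set.range (fun i => X i ω) := fun j => hsub (hpS j)
  choose g hg using fun j => hrange j
  have hXx : (fun j => (X (g j) ω).1) = fun j => (p j).1 :=
    funext fun j => congrArg Prod.fst (hg j)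
  have hXy : (fun j => (X (g j) ω).2) = fun j => (p j).2 :=
    funext fun j => congrArg Prod.snd (hg j)
  refine ⟨g, ?_, ?_⟩
  · rw [hXx]; exact hxmono
  · rcases hmon with hinc | hdec
    · left
      have : ((fun j => (X (g j) ω).2) ∘ (1 : Equiv.Perm (Fin k))) = fun j => (p j).2 := by
        funext j; exact congrArg Prod.snd (hg j)
      rw [this]
      intro a b hab
      exact hinc (p a) (hpS a) (p b) (hpS b) (hxmono hab)
    · right
      have : ((fun j => (X (g j) ω).2) ∘ (Fin.revPerm : Equiv.Perm (Fin k))) =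
          fun j => (p (Fin.rev j)).2 := by
        funext j; exact congrArg Prod.snd (hg (Fin.rev j))
      rw [this]
      intro a b hab
      have hrev : Fin.rev b < Fin.rev a := Fin.rev_lt_rev.2 hab
      exact hdec (p (Fin.rev b)) (hpS _) (p (Fin.rev a)) (hpS _) (hxmono hrev)

theorem stmt0 (n m : ℕ) (hn : 24 ≤ n)
    (hm : (m : ℝ) ≤ ((n : ℝ) / (48 * Real.exp 1)) ^ 2)
    {Ω : Type*} [MeasurableSpace Ω] (μ : Measure Ω) [IsProbabilityMeasure μ]
    (X : Fin m → Ω → ℝ × ℝ) (hmeas : ∀ i, Measurable (X i))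
    (hindep : ProbabilityTheory.iIndepFun X μ)
    (hlaw : ∀ i, Measure.map (X i) μ = unifSquare) :
    ENNReal.ofReal (1 - 8 * (4 : ℝ) ^ (-(n : ℝ) / 12)) ≤
      μ {ω | ¬ ∃ S : Finset (ℝ × ℝ),
        (↑S : Set (ℝ × ℝ)) ⊆ Set.range (fun i => X i ω) ∧
        S.card = n / 12 ∧ MonotonePts (↑S : Set (ℝ × ℝ))} := by
  classical
  set k := n / 12 with hk
  set Bad : Set Ω := {ω | ∃ S : Finset (ℝ × ℝ),
      (↑S : Set (ℝ × ℝ)) ⊆ Set.range (fun i => X i ω) ∧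
      S.card = k ∧ MonotonePts (↑S : Set (ℝ × ℝ))} with hBadDef
  have hgoal : {ω | ¬ ∃ S : Finset (ℝ × ℝ),
      (↑S : Set (ℝ × ℝ)) ⊆ Set.range (fun i => X i ω) ∧
      S.card = n / 12 ∧ MonotonePts (↑S : Set (ℝ × ℝ))} = Badᶜ := rfl
  rw [hgoal]
  set A : (Fin k → Fin m) → Equiv.Perm (Fin k) → Set Ω := fun g σ =>
    {ω | StrictMono (fun j => (X (g j) ω).1) ∧
      StrictMono ((fun j => (X (g j) ω).2) ∘ σ)} with hA
  have hsub : Bad ⊆ ⋃ g : Fin k → Fin m, (A g 1 ∪ A g Fin.revPerm) := by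
    rintro ω ⟨S, h1, h2, h3⟩
    obtain ⟨g, hx, hy⟩ := bad_mem_union X ω S h1 h2 h3
    refine Set.mem_iUnion.2 ⟨g, ?_⟩
    rcases hy with h | h
    · exact Or.inl ⟨hx, h⟩
    · exact Or.inr ⟨hx, h⟩
  set q : ℝ≥0∞ := ((Nat.factorial k : ℝ≥0∞))⁻¹ with hq
  have hBadBound : μ Bad ≤ ENNReal.ofReal (8 * (4 : ℝ) ^ (-(n : ℝ) / 12)) := by
    have step : μ Bad ≤ ∑' g : Fin k → Fin m, (q * q + q * q) := by
      refine (measure_mono hsub).trans ((measure_iUnion_le _).trans ?_)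
      refine ENNReal.tsum_le_tsum fun g => (measure_union_le _ _).trans ?_
      exact add_le_add (bound_A μ X hmeas hindep hlaw g 1)
        (bound_A μ X hmeas hindep hlaw g Fin.revPerm)
    have hcount : ∑' _g : Fin k → Fin m, (q * q + q * q) =
        ((m ^ k : ℕ) : ℝ≥0∞) * (q * q + q * q) := by
      rw [tsum_fintype, Finset.sum_const, Finset.card_univ, nsmul_eq_mul]
      congr 2
      rw [Fintype.card_fun, Fintype.card_fin, Fintype.card_fin]
    have hofReal : ((m ^ k : ℕ) : ℝ≥0∞) * (q * q + q * q) =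
        ENNReal.ofReal ((m : ℝ) ^ k *
          (2 * (((Nat.factorial k : ℝ))⁻¹ * ((Nat.factorial k : ℝ))⁻¹))) := by
      have hqr : q = ENNReal.ofReal (((Nat.factorial k : ℝ))⁻¹) := by
        rw [hq, ENNReal.ofReal_inv_of_pos (by exact_mod_cast Nat.factorial_pos k),
          ENNReal.ofReal_natCast]
      rw [hqr, ← ENNReal.ofReal_mul (by positivity)]
      rw [show ENNReal.ofReal (((Nat.factorial k:ℝ))⁻¹ * ((Nat.factorial k:ℝ))⁻¹) +
          ENNReal.ofReal (((Nat.factorial k:ℝ))⁻¹ * ((Nat.factorial k:ℝ))⁻¹) =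
          ENNReal.ofReal (2 * (((Nat.factorial k:ℝ))⁻¹ * ((Nat.factorial k:ℝ))⁻¹)) by
        rw [← ENNReal.ofReal_add (by positivity) (by positivity)]; ring_nf]
      rw [← ENNReal.ofReal_natCast (m ^ k), ← ENNReal.ofReal_mul (by positivity)]
      congr 1
      push_cast
      ring
    calc μ Bad ≤ ∑' _g : Fin k → Fin m, (q * q + q * q) := step
      _ = ENNReal.ofReal ((m : ℝ) ^ k *
          (2 * (((Nat.factorial k : ℝ))⁻¹ * ((Nat.factorial k : ℝ))⁻¹))) := by
          rw [hcount, hofReal]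
      _ ≤ ENNReal.ofReal (8 * (4 : ℝ) ^ (-(n : ℝ) / 12)) :=
          ENNReal.ofReal_le_ofReal (real_bound n k m hn hk hm)
  have hone : (1 : ℝ≥0∞) ≤ μ Bad + μ Badᶜ := by
    rw [← measure_univ (μ := μ), ← Set.union_compl_self Bad]
    exact measure_union_le _ _
  have h2 : (1 : ℝ≥0∞) - μ Bad ≤ μ Badᶜ := tsub_le_iff_left.2 hone
  have h3 : (1 : ℝ≥0∞) - ENNReal.ofReal (8 * (4 : ℝ) ^ (-(n : ℝ) / 12)) ≤
      (1 : ℝ≥0∞) - μ Bad := tsub_le_tsub_left hBadBound 1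
  refine le_trans ?_ (le_trans h3 h2)
  rw [ENNReal.ofReal_sub _ (by positivity), ENNReal.ofReal_one]
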